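/- Let p : R^d -> R be a nonnegative polynomial such that some coefficient of a monomial of top degree is nonzero. Then inf_{z in R^d} sup_{|u - z| <= 1} p(u) > 0. -/

import Mathlib

open MvPolynomial Metric

lemma totalDegree_natCast' {d : ℕ} (n : ℕ) : ((n : MvPolynomial (Fin d) ℝ)).totalDegree = 0 := by
  rw [← C_eq_coe_nat]; exact totalDegree_C _

def DegSmall {d : ℕ} (n : ℕ) (r : MvPolynomial (Fin d) ℝ) : Prop :=
  r = 0 ∨ r.totalDegree < n

lemma DegSmall.add {d n} {a b : MvPolynomial (Fin d) ℝ} (ha : DegSmall n a) (hb : DegSmall n b) :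
    DegSmall n (a + b) := by
  rcases ha with rfl | ha
  · simpa using hb
  rcases hb with rfl | hb
  · right; simpa using ha
  · right; exact lt_of_le_of_lt (totalDegree_add a b) (by omega)

lemma degSmall_mul_left {d j k : ℕ} {x y : MvPolynomial (Fin d) ℝ}
    (hx : x.totalDegree ≤ j) (hy : DegSmall k y) : DegSmall (j + k) (x * y) := by
  rcases hy with rfl | hy
  · left; ring
  · right
    calc (x * y).totalDegree ≤ x.totalDegree + y.totalDegree := totalDegree_mul _ _
    _ < j + k := by omega

lemma degSmall_mul_right {d j k : ℕ} {x y : MvPolynomial (Fin d) ℝ}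
    (hx : DegSmall j x) (hy : y.totalDegree ≤ k) : DegSmall (j + k) (x * y) := by
  rcases hx with rfl | hx
  · left; ring
  · right
    calc (x * y).totalDegree ≤ x.totalDegree + y.totalDegree := totalDegree_mul _ _
    _ < j + k := by omega

/-- `(X a + C c)^b = X a ^ b + r'` with `r'` small. -/
lemma pow_add_C {d : ℕ} (a : Fin d) (c : ℝ) (b : ℕ) :
    ∃ r', (X a + C c) ^ b = X a ^ b + r' ∧ DegSmall b r' := by
  rcases Nat.eq_zero_or_pos b with rfl | hb
  · exact ⟨0, by simp, Or.inl rfl⟩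
  refine ⟨∑ k ∈ Finset.range b, X a ^ k * C c ^ (b - k) * (b.choose k : MvPolynomial (Fin d) ℝ),
    ?_, Or.inr ?_⟩
  · rw [add_pow, Finset.sum_range_succ]
    simp [add_comm]
  · refine lt_of_le_of_lt (totalDegree_finset_sum _ _) ?_
    refine Finset.sup_lt_iff (by simpa using hb) |>.mpr ?_
    intro k hk
    rw [Finset.mem_range] at hk
    calc (X a ^ k * C c ^ (b-k) * (b.choose k : MvPolynomial (Fin d) ℝ)).totalDegree
        ≤ (X a ^ k * C c ^ (b-k)).totalDegree
          + (b.choose k : MvPolynomial (Fin d) ℝ).totalDegree := totalDegree_mul _ _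
      _ ≤ ((X a ^ k).totalDegree + (C c ^ (b-k) : MvPolynomial (Fin d) ℝ).totalDegree)
          + (b.choose k : MvPolynomial (Fin d) ℝ).totalDegree := by
            gcongr; exact totalDegree_mul _ _
      _ ≤ (k * 1 + (b-k) * 0) + 0 := by
            gcongr
            · exact (totalDegree_pow _ _).trans (by simp [totalDegree_X])
            · exact (totalDegree_pow _ _).trans (by simp)
            · simp [totalDegree_natCast']
      _ < b := by omega

lemma degSmall_mul {d j k : ℕ} {x y : MvPolynomial (Fin d) ℝ}
    (hx : DegSmall j x) (hy : DegSmall k y) : DegSmall (j + k) (x * y) := by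
  rcases hx with rfl | hx
  · left; ring
  rcases hy with rfl | hy
  · left; ring
  right
  calc (x * y).totalDegree ≤ x.totalDegree + y.totalDegree := totalDegree_mul _ _
  _ < j + k := by omega

lemma prod_translate {d : ℕ} (z : Fin d → ℝ) (m : Fin d →₀ ℕ) :
    ∃ r, (m.prod fun i e => (X i + C (z i)) ^ e) = monomial m 1 + r ∧
      DegSmall (m.sum fun _ e => e) r := by
  induction m using Finsupp.induction with
  | zero => exact ⟨0, by simp, Or.inl rfl⟩
  | single_add a b f ha hb IH =>
    obtain ⟨r, hr, hsr⟩ := IH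
    obtain ⟨r', hr', hsr'⟩ := pow_add_C a (z a) b
    have hprod : ((Finsupp.single a b + f).prod fun i e => (X i + C (z i)) ^ e)
        = (X a + C (z a)) ^ b * (f.prod fun i e => (X i + C (z i)) ^ e) := by
      rw [Finsupp.prod_add_index' (fun i => pow_zero _) (fun i e₁ e₂ => pow_add _ _ _),
        Finsupp.prod_single_index (h := fun i e => (X i + C (z i)) ^ e) (pow_zero _)]
    have hsum : ((Finsupp.single a b + f).sum fun _ e => e)
        = b + (f.sum fun _ e => e) := by
      rw [Finsupp.sum_add_index' (fun _ => rfl) (fun _ _ _ => rfl),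
        Finsupp.sum_single_index rfl]
    refine ⟨X a ^ b * r + r' * monomial f 1 + r' * r, ?_, ?_⟩
    · rw [hprod, hr, hr']
      have hXm : (X a ^ b * monomial f 1 : MvPolynomial (Fin d) ℝ)
          = monomial (Finsupp.single a b + f) 1 := by
        rw [X_pow_eq_monomial, monomial_mul, one_mul]
      have hexp : (X a ^ b + r') * ((monomial f) 1 + r)
          = X a ^ b * (monomial f) 1 + (X a ^ b * r + r' * (monomial f) 1 + r' * r) := by ring
      rw [hexp, hXm]
    · rw [hsum]
      refine DegSmall.add (DegSmall.add ?_ ?_) ?_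
      · exact degSmall_mul_left ((totalDegree_pow _ _).trans (by simp [totalDegree_X])) hsr
      · exact degSmall_mul_right hsr'
          ((totalDegree_monomial_le _ _))
      · exact degSmall_mul hsr' hsr

lemma totalDegree_translate_le {d : ℕ} (z : Fin d → ℝ) (q : MvPolynomial (Fin d) ℝ) :
    (bind₁ (fun i => X i + C (z i)) q).totalDegree ≤ q.totalDegree := by
  conv_lhs => rw [q.as_sum]
  rw [map_sum]
  refine totalDegree_finsetSum_le fun m hm => ?_
  rw [bind₁_monomial]
  obtain ⟨r, hr, hsr⟩ := prod_translate z m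
  simp only [Finsupp.prod] at hr
  rw [hr]
  refine (totalDegree_mul _ _).trans ?_
  rw [totalDegree_C, zero_add]
  refine (totalDegree_add _ _).trans ?_
  refine max_le ((totalDegree_monomial_le _ _).trans (le_totalDegree hm)) ?_
  rcases hsr with rfl | hsr
  · simp
  · exact (le_of_lt hsr).trans (le_totalDegree hm)

lemma coeff_translate_top {d : ℕ} (z : Fin d → ℝ) (q : MvPolynomial (Fin d) ℝ)
    (s : Fin d →₀ ℕ) (hs : q.totalDegree ≤ s.sum fun _ e => e) :
    coeff s (bind₁ (fun i => X i + C (z i)) q) = coeff s q := by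
  conv_lhs => rw [q.as_sum]
  conv_rhs => rw [q.as_sum]
  rw [map_sum, coeff_sum, coeff_sum]
  refine Finset.sum_congr rfl fun m hm => ?_
  have hm' : (m.sum fun _ e => e) ≤ s.sum fun _ e => e := (le_totalDegree hm).trans hs
  rw [bind₁_monomial]
  obtain ⟨r, hr, hsr⟩ := prod_translate z m
  simp only [Finsupp.prod] at hr
  have hr0 : coeff s r = 0 := by
    rcases hsr with rfl | hsr
    · simp
    · rcases Nat.eq_zero_or_pos (m.sum fun _ e => e) with h0 | h0
      · omega
      · exact coeff_eq_zero_of_totalDegree_lt (lt_of_lt_of_le hsr hm')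
  rw [hr, mul_add, coeff_add, coeff_C_mul, coeff_C_mul, hr0, mul_zero, add_zero,
    coeff_monomial, coeff_monomial]
  split <;> simp

lemma exists_ball_eval_ne_zero {d : ℕ} {q : MvPolynomial (Fin d) ℝ} (hq : q ≠ 0) :
    ∃ u : EuclideanSpace ℝ (Fin d), u ∈ closedBall (0 : EuclideanSpace ℝ (Fin d)) 1 ∧
      eval (fun i => u i) q ≠ 0 := by
  have hx : ∃ x : Fin d → ℝ, eval x q ≠ 0 := by
    by_contra h
    push_neg at h
    exact hq (MvPolynomial.funext fun x => by simp [h x])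
  obtain ⟨x, hx⟩ := hx
  set P : Polynomial ℝ :=
    eval₂ (Polynomial.C : ℝ →+* Polynomial ℝ) (fun i => Polynomial.C (x i) * Polynomial.X) q
    with hP
  have hPt : ∀ t : ℝ, P.eval t = eval (fun i => x i * t) q := by
    intro t
    have h1 : (Polynomial.evalRingHom t) (eval₂ (Polynomial.C : ℝ →+* Polynomial ℝ)
        (fun i => Polynomial.C (x i) * Polynomial.X) q)
        = eval₂ ((Polynomial.evalRingHom t).comp (Polynomial.C : ℝ →+* Polynomial ℝ))
          ((Polynomial.evalRingHom t) ∘ fun i => Polynomial.C (x i) * Polynomial.X) q :=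
      eval₂_comp_left _ _ _ _
    have h2 : (Polynomial.evalRingHom t).comp (Polynomial.C : ℝ →+* Polynomial ℝ)
        = RingHom.id ℝ := by
      ext r; simp
    rw [hP]
    show (Polynomial.evalRingHom t) _ = _
    rw [h1, h2]
    rw [show ((Polynomial.evalRingHom t) ∘ fun i => Polynomial.C (x i) * Polynomial.X)
      = fun i => x i * t by funext i; simp]
    exact eval₂_id _
  have hP0 : P ≠ 0 := by
    intro h
    apply hx
    have := hPt 1
    rw [h] at this
    simpa using this.symm
  set X₀ : EuclideanSpace ℝ (Fin d) := (WithLp.equiv 2 (Fin d → ℝ)).symm x with hX₀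
  set δ : ℝ := (1 + ‖X₀‖)⁻¹ with hδ
  have hδpos : 0 < δ := by positivity
  have hne : ((Set.Ioc (0:ℝ) δ) \ {t | P.IsRoot t}).Nonempty := by
    refine Set.Infinite.nonempty (Set.Infinite.diff ?_ (Polynomial.finite_setOf_isRoot hP0))
    exact Set.Ioc_infinite hδpos
  obtain ⟨t, ht⟩ := hne
  obtain ⟨⟨ht0, htδ⟩, htr⟩ := ht
  refine ⟨t • X₀, ?_, ?_⟩
  · rw [mem_closedBall_zero_iff, norm_smul]
    have hn : 0 ≤ ‖X₀‖ := norm_nonneg _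
    calc ‖t‖ * ‖X₀‖ ≤ δ * ‖X₀‖ := by
          apply mul_le_mul_of_nonneg_right _ hn
          rw [Real.norm_eq_abs, abs_of_pos ht0]; exact htδ
      _ ≤ 1 := by
          rw [hδ, inv_mul_le_iff₀ (by positivity)]
          linarith
  · have hco : (fun i => (t • X₀) i) = fun i => x i * t := by
      funext i
      simp [hX₀, mul_comm]
    rw [hco, ← hPt]
    exact htr

lemma real_sSup_mul {a : ℝ} (S : Set ℝ) (ha : 0 ≤ a) (hne : S.Nonempty) (hbdd : BddAbove S) :
    sSup ((fun y => a * y) '' S) = a * sSup S := by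
  rcases eq_or_lt_of_le ha with rfl | ha
  · have : (fun y => (0:ℝ) * y) '' S = {0} := by
      ext y
      constructor
      · rintro ⟨x, _, rfl⟩; simp
      · rintro rfl; obtain ⟨x, hx⟩ := hne; exact ⟨x, hx, by simp⟩
    rw [this]; simp
  · obtain ⟨M, hM⟩ := hbdd
    have hbddim : BddAbove ((fun y => a * y) '' S) := by
      refine ⟨a * M, ?_⟩
      rintro _ ⟨y, hy, rfl⟩
      exact mul_le_mul_of_nonneg_left (hM hy) ha.le
    refine le_antisymm ?_ ?_
    · refine csSup_le (hne.image _) ?_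
      rintro _ ⟨y, hy, rfl⟩
      exact mul_le_mul_of_nonneg_left (le_csSup ⟨M, hM⟩ hy) ha.le
    · have h1 : sSup S ≤ a⁻¹ * sSup ((fun y => a * y) '' S) := by
        refine csSup_le hne fun y hy => ?_
        have h2 : a * y ≤ sSup ((fun y => a * y) '' S) := le_csSup hbddim ⟨y, hy, rfl⟩
        calc y = a⁻¹ * (a * y) := by field_simp
          _ ≤ a⁻¹ * sSup ((fun y => a * y) '' S) := by
              exact mul_le_mul_of_nonneg_left h2 (by positivity)
      calc a * sSup S ≤ a * (a⁻¹ * sSup ((fun y => a * y) '' S)) :=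
            mul_le_mul_of_nonneg_left h1 ha.le
        _ = sSup ((fun y => a * y) '' S) := by field_simp

lemma coord_abs_le_norm {d : ℕ} (u : EuclideanSpace ℝ (Fin d)) (i : Fin d) : |u i| ≤ ‖u‖ := by
  rw [EuclideanSpace.norm_eq]
  rw [Real.le_sqrt (abs_nonneg _)]
  have h : |u i| ^ 2 = ‖u i‖ ^ 2 := by rw [Real.norm_eq_abs]
  rw [h]
  refine Finset.single_le_sum (f := fun j => ‖u j‖ ^ 2) (fun j _ => by positivity) (Finset.mem_univ i)
  positivity

noncomputable def Dset (d N : ℕ) : Finset (Fin d →₀ ℕ) :=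
  Finset.Iic (Finsupp.equivFunOnFinite.symm fun _ => N)

lemma mem_Dset {d N : ℕ} {m : Fin d →₀ ℕ} (h : (m.sum fun _ e => e) ≤ N) : m ∈ Dset d N := by
  rw [Dset, Finset.mem_Iic]
  intro i
  have h1 : m i ≤ m.sum fun _ e => e := by
    by_cases hi : i ∈ m.support
    · exact Finset.single_le_sum (f := fun j => m j) (fun j _ => Nat.zero_le _) hi
    · simp [Finsupp.notMem_support_iff.mp hi]
  simpa using le_trans h1 h

noncomputable def evc {d N : ℕ} (c : {m // m ∈ Dset d N} → ℝ) (u : Fin d → ℝ) : ℝ :=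
  ∑ m : {m // m ∈ Dset d N}, c m * ∏ i, u i ^ (m.1 i)

lemma evc_eq_eval {d N : ℕ} (q : MvPolynomial (Fin d) ℝ) (hq : q.support ⊆ Dset d N)
    (u : Fin d → ℝ) : evc (fun m : {m // m ∈ Dset d N} => coeff m.1 q) u = eval u q := by
  rw [eval_eq', evc]
  rw [Finset.sum_coe_sort (Dset d N) (fun m => coeff m q * ∏ i, u i ^ m i)]
  exact (Finset.sum_subset hq fun m _ hm => by
    rw [notMem_support_iff.mp hm, zero_mul]).symm

lemma evc_smul {d N : ℕ} (a : ℝ) (c : {m // m ∈ Dset d N} → ℝ) (u : Fin d → ℝ) :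
    evc (a • c) u = a * evc c u := by
  simp [evc, Finset.mul_sum, mul_assoc]

lemma evc_sub {d N : ℕ} (c c' : {m // m ∈ Dset d N} → ℝ) (u : Fin d → ℝ) :
    evc (c - c') u = evc c u - evc c' u := by
  simp [evc, sub_mul, Finset.sum_sub_distrib]

lemma evc_poly {d N : ℕ} (c : {m // m ∈ Dset d N} → ℝ) :
    ∃ q : MvPolynomial (Fin d) ℝ, (c ≠ 0 → q ≠ 0) ∧ ∀ u, eval u q = evc c u := by
  classical
  refine ⟨∑ m : {m // m ∈ Dset d N}, monomial m.1 (c m), ?_, ?_⟩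
  · intro hc h0
    obtain ⟨m₀, hm₀⟩ := Function.ne_iff.mp hc
    have hco : coeff m₀.1 (∑ m : {m // m ∈ Dset d N}, monomial m.1 (c m)) = c m₀ := by
      rw [coeff_sum]
      rw [Finset.sum_eq_single m₀]
      · simp [coeff_monomial]
      · intro m _ hm
        rw [coeff_monomial, if_neg (fun h => hm (Subtype.ext h))]
      · intro h; exact absurd (Finset.mem_univ m₀) h
    rw [h0] at hco
    simp at hco
    exact hm₀ hco.symm
  · intro u
    rw [map_sum, evc]
    refine Finset.sum_congr rfl fun m _ => ?_
    rw [eval_monomial, Finsupp.prod_pow]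

noncomputable def Fsup (d N : ℕ) (c : {m // m ∈ Dset d N} → ℝ) : ℝ :=
  sSup ((fun u : EuclideanSpace ℝ (Fin d) => |evc c (fun i => u i)|) ''
    closedBall (0 : EuclideanSpace ℝ (Fin d)) 1)

lemma Fsup_lower_bound (d N : ℕ) :
    ∃ ε₀ : ℝ, 0 < ε₀ ∧ ∀ c : {m // m ∈ Dset d N} → ℝ, ε₀ * ‖c‖ ≤ Fsup d N c := by
  classical
  haveI hneD : Nonempty {m // m ∈ Dset d N} := ⟨⟨0, mem_Dset (by simp)⟩⟩
  set K : ℝ := (Fintype.card {m // m ∈ Dset d N} : ℝ) with hK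
  have hK0 : 0 ≤ K := by positivity
  have hBne : (closedBall (0 : EuclideanSpace ℝ (Fin d)) 1).Nonempty :=
    ⟨0, mem_closedBall_self zero_le_one⟩
  have hbound : ∀ (c : {m // m ∈ Dset d N} → ℝ) (u : EuclideanSpace ℝ (Fin d)),
      u ∈ closedBall (0 : EuclideanSpace ℝ (Fin d)) 1 → |evc c (fun i => u i)| ≤ K * ‖c‖ := by
    intro c u hu
    have hcoord : ∀ i, |u i| ≤ 1 := fun i =>
      (coord_abs_le_norm u i).trans (mem_closedBall_zero_iff.mp hu)
    calc |evc c (fun i => u i)| ≤ ∑ m : {m // m ∈ Dset d N}, |c m * ∏ i, u i ^ (m.1 i)| :=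
          Finset.abs_sum_le_sum_abs _ _
      _ ≤ ∑ _m : {m // m ∈ Dset d N}, ‖c‖ * 1 := by
          refine Finset.sum_le_sum fun m _ => ?_
          rw [abs_mul]
          refine mul_le_mul ?_ ?_ (abs_nonneg _) (norm_nonneg _)
          · exact norm_le_pi_norm c m
          · rw [Finset.abs_prod]
            refine Finset.prod_le_one (fun i _ => by positivity) fun i _ => ?_
            rw [abs_pow]
            exact pow_le_one₀ (abs_nonneg _) (hcoord i)
      _ = K * ‖c‖ := by
          rw [Finset.sum_const, Finset.card_univ, nsmul_eq_mul, mul_one, hK]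
  have hbddA : ∀ c, BddAbove ((fun u : EuclideanSpace ℝ (Fin d) => |evc c (fun i => u i)|) ''
      closedBall (0 : EuclideanSpace ℝ (Fin d)) 1) := fun c =>
    ⟨K * ‖c‖, by rintro _ ⟨u, hu, rfl⟩; exact hbound c u hu⟩
  have hleF : ∀ c (u : EuclideanSpace ℝ (Fin d)),
      u ∈ closedBall (0 : EuclideanSpace ℝ (Fin d)) 1 →
      |evc c (fun i => u i)| ≤ Fsup d N c := fun c u hu => le_csSup (hbddA c) ⟨u, hu, rfl⟩
  have hF0 : ∀ c, 0 ≤ Fsup d N c := fun c =>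
    le_trans (abs_nonneg _) (hleF c 0 (mem_closedBall_self zero_le_one))
  have hlip : ∀ c c', Fsup d N c ≤ Fsup d N c' + K * ‖c - c'‖ := by
    intro c c'
    refine csSup_le (hBne.image _) ?_
    rintro _ ⟨u, hu, rfl⟩
    have h1 : |evc c (fun i => u i)| ≤ |evc c' (fun i => u i)| + |evc (c - c') (fun i => u i)| := by
      rw [evc_sub]
      calc |evc c (fun i => u i)|
          = |evc c' (fun i => u i) + (evc c (fun i => u i) - evc c' (fun i => u i))| := by
            congr 1; ring
        _ ≤ _ := abs_add_le _ _
    exact h1.trans (add_le_add (hleF c' u hu) (hbound (c - c') u hu))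
  have hcont : Continuous (Fsup d N) := by
    have : LipschitzWith (Real.toNNReal K) (Fsup d N) := by
      refine LipschitzWith.of_dist_le_mul fun c c' => ?_
      rw [Real.dist_eq, dist_eq_norm, Real.coe_toNNReal K hK0, abs_le]
      have h1 := hlip c c'
      have h2 := hlip c' c
      rw [norm_sub_rev] at h2
      constructor <;> linarith
    exact this.continuous
  have hFpos : ∀ c, c ≠ 0 → 0 < Fsup d N c := by
    intro c hc
    obtain ⟨q, hq0, hqe⟩ := evc_poly c
    obtain ⟨u, hu, hune⟩ := exists_ball_eval_ne_zero (hq0 hc)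
    have h2 : 0 < |evc c (fun i => u i)| := by
      rw [← hqe (fun i => u i)]
      exact abs_pos.mpr hune
    exact lt_of_lt_of_le h2 (hleF c u hu)
  have hhom : ∀ (a : ℝ), 0 ≤ a → ∀ c, Fsup d N (a • c) = a * Fsup d N c := by
    intro a ha c
    have himg : ((fun u : EuclideanSpace ℝ (Fin d) => |evc (a • c) (fun i => u i)|) ''
        closedBall (0 : EuclideanSpace ℝ (Fin d)) 1)
        = (fun y => a * y) '' ((fun u : EuclideanSpace ℝ (Fin d) => |evc c (fun i => u i)|) ''
          closedBall (0 : EuclideanSpace ℝ (Fin d)) 1) := by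
      have hfun : (fun u : EuclideanSpace ℝ (Fin d) => |evc (a • c) (fun i => u i)|)
          = fun u : EuclideanSpace ℝ (Fin d) => a * |evc c (fun i => u i)| := by
        funext u
        rw [evc_smul, abs_mul, abs_of_nonneg ha]
      rw [Set.image_image, hfun]
    rw [Fsup, himg]
    exact real_sSup_mul _ ha (hBne.image _) (hbddA c)
  have hsph : IsCompact (sphere (0 : {m // m ∈ Dset d N} → ℝ) 1) := isCompact_sphere _ _
  have hsphne : (sphere (0 : {m // m ∈ Dset d N} → ℝ) 1).Nonempty :=
    NormedSpace.sphere_nonempty.mpr zero_le_one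
  obtain ⟨c₀, hc₀mem, hc₀min⟩ := hsph.exists_isMinOn hsphne hcont.continuousOn
  have hc₀norm : ‖c₀‖ = 1 := mem_sphere_zero_iff_norm.mp hc₀mem
  have hc₀ : c₀ ≠ 0 := by
    intro h
    rw [h, norm_zero] at hc₀norm
    norm_num at hc₀norm
  refine ⟨Fsup d N c₀, hFpos c₀ hc₀, ?_⟩
  intro c
  rcases eq_or_ne c 0 with rfl | hc
  · simpa using hF0 0
  · have hR : 0 < ‖c‖ := norm_pos_iff.mpr hc
    have hunit : (‖c‖⁻¹ • c) ∈ sphere (0 : {m // m ∈ Dset d N} → ℝ) 1 := by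
      rw [mem_sphere_zero_iff_norm, norm_smul, norm_inv, norm_norm]
      field_simp
    have h1 : Fsup d N c₀ ≤ Fsup d N (‖c‖⁻¹ • c) := hc₀min hunit
    have h2 : Fsup d N c = ‖c‖ * Fsup d N (‖c‖⁻¹ • c) := by
      have h3 := hhom ‖c‖ hR.le (‖c‖⁻¹ • c)
      rw [smul_smul, mul_inv_cancel₀ hR.ne', one_smul] at h3
      linarith
    calc Fsup d N c₀ * ‖c‖ ≤ Fsup d N (‖c‖⁻¹ • c) * ‖c‖ := by nlinarith
      _ = Fsup d N c := by rw [h2]; ring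

/-- If `p : ℝ^d → ℝ` is a nonnegative polynomial with a nonzero coefficient in top degree,
then `inf_z sup_{|u-z| ≤ 1} p(u) > 0`. -/
theorem nonneg_polynomial_inf_sup_pos (d : ℕ) (p : MvPolynomial (Fin d) ℝ)
    (hpos : ∀ x : Fin d → ℝ, 0 ≤ MvPolynomial.eval x p)
    (htop : ∃ s : Fin d →₀ ℕ, p.coeff s ≠ 0 ∧ (s.sum fun _ e => e) = p.totalDegree) :
    ∃ ε : ℝ, 0 < ε ∧ ∀ z : EuclideanSpace ℝ (Fin d),
      ε ≤ sSup ((fun u : EuclideanSpace ℝ (Fin d) =>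
        MvPolynomial.eval (fun i => u i) p) '' closedBall z 1) := by
  classical
  obtain ⟨s, hs0, hstop⟩ := htop
  obtain ⟨ε₀, hε₀, hlow⟩ := Fsup_lower_bound d p.totalDegree
  refine ⟨ε₀ * |coeff s p|, mul_pos hε₀ (abs_pos.mpr hs0), ?_⟩
  intro z
  set T := bind₁ (fun i => X i + C (z i)) p with hT
  set c : {m // m ∈ Dset d p.totalDegree} → ℝ := fun m => coeff m.1 T with hc
  have hTdeg : T.totalDegree ≤ p.totalDegree := by
    rw [hT]; exact totalDegree_translate_le _ p
  have hsupp : T.support ⊆ Dset d p.totalDegree := fun m hm =>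
    mem_Dset ((le_totalDegree hm).trans hTdeg)
  have heq : ∀ u : Fin d → ℝ, evc c u = eval u T := fun u => evc_eq_eval T hsupp u
  have ha : ∀ (f : Fin d → ℝ) (q : MvPolynomial (Fin d) ℝ), aeval f q = eval f q := fun f q => by
    rw [← coe_aeval_eq_eval]; rfl
  have heval : ∀ v : Fin d → ℝ, eval v T = eval (fun i => v i + z i) p := by
    intro v
    have hfg : (fun i => aeval (R := ℝ) v (X i + C (z i))) = fun i => v i + z i := by
      funext i
      simp [ha]
    rw [hT, ← ha v, aeval_bind₁, hfg, ha]
  have hcs : coeff s T = coeff s p := by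
    rw [hT]; exact coeff_translate_top _ p s (le_of_eq hstop.symm)
  have hsD : s ∈ Dset d p.totalDegree := mem_Dset (le_of_eq hstop)
  have hnorm : |coeff s p| ≤ ‖c‖ := by
    calc |coeff s p| = ‖c ⟨s, hsD⟩‖ := by rw [hc]; simp [Real.norm_eq_abs, hcs]
      _ ≤ ‖c‖ := norm_le_pi_norm c _
  have hset : ((fun u : EuclideanSpace ℝ (Fin d) => eval (fun i => u i) p) '' closedBall z 1)
      = ((fun u : EuclideanSpace ℝ (Fin d) => |evc c (fun i => u i)|) ''
        closedBall (0 : EuclideanSpace ℝ (Fin d)) 1) := by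
    ext y
    constructor
    · rintro ⟨u, hu, rfl⟩
      refine ⟨u - z, ?_, ?_⟩
      · rw [mem_closedBall_zero_iff, ← dist_eq_norm]
        exact mem_closedBall.mp hu
      · show |evc c (fun i => (u - z) i)| = eval (fun i => u i) p
        rw [heq, heval]
        have hfun : (fun i => (u - z) i + z i) = fun i => u i := by funext i; simp
        rw [hfun]
        exact abs_of_nonneg (hpos _)
    · rintro ⟨v, hv, rfl⟩
      refine ⟨v + z, ?_, ?_⟩
      · rw [mem_closedBall, dist_eq_norm]
        simpa using mem_closedBall_zero_iff.mp hv
      · show eval (fun i => (v + z) i) p = |evc c (fun i => v i)|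
        rw [heq, heval, abs_of_nonneg (hpos _)]
        have hfun : (fun i => (v + z) i) = fun i => v i + z i := by funext i; simp
        rw [hfun]
  rw [hset]
  have h1 : ε₀ * |coeff s p| ≤ Fsup d p.totalDegree c := by
    have h2 : ε₀ * |coeff s p| ≤ ε₀ * ‖c‖ := by nlinarith
    exact h2.trans (hlow c)
  exact h1
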